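/- Fix a dimension d ≥ 1 and let μ be the uniform probability measure on the closed unit ball of EuclideanSpace ℝ (Fin d). There exists a constant c > 0, depending only on d, such that for every n ≥ 2, if X_1, …, X_n are independent random points each distributed according to μ (equivalently, integrating over the product measure μ^n), then the expected nearest-neighbour distance satisfies E[ min_{2 ≤ j ≤ n} ‖X_1 − X_j‖ ] ≥ c · n^{−1/d}. -/

import Mathlib

open MeasureTheory Metric
open scoped ENNReal

section PairMap

variable {α : Type*} [MeasurableSpace α]

lemma nn_pair_map (ν : Measure α) [IsProbabilityMeasure ν]
    {n : ℕ} (i j : Fin n) (hij : j ≠ i) :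
    Measure.map (fun x : Fin n → α => (x i, x j)) (Measure.pi fun _ => ν) = ν.prod ν := by
  classical
  have hmeas : Measurable (fun x : Fin n → α => (x i, x j)) :=
    (measurable_pi_apply i).prodMk (measurable_pi_apply j)
  refine (Measure.prod_eq (μ := ν) (ν := ν) fun s t hs ht => ?_).symm
  rw [Measure.map_apply hmeas (hs.prod ht)]
  have hpre : (fun x : Fin n → α => (x i, x j)) ⁻¹' (s ×ˢ t)
      = Set.pi Set.univ (fun k => if k = i then s else if k = j then t else Set.univ) := by
    ext x
    simp only [Set.mem_preimage, Set.mem_prod, Set.mem_pi, Set.mem_univ, forall_true_left]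
    constructor
    · rintro ⟨h1, h2⟩ k
      by_cases hk : k = i
      · subst hk; simp [h1]
      · by_cases hk' : k = j
        · subst hk'; simp [hk, h2]
        · simp [hk, hk']
    · intro h
      refine ⟨?_, ?_⟩
      · have := h i; simpa using this
      · have := h j; simpa [hij] using this
  rw [hpre, Measure.pi_pi]
  have hprod : ∀ k : Fin n, ν (if k = i then s else if k = j then t else Set.univ)
      = if k = i then ν s else if k = j then ν t else 1 := by
    intro k
    by_cases hk : k = i
    · simp [hk]
    · by_cases hk' : k = j <;> simp [hk, hk', hij]
  rw [Finset.prod_congr rfl (fun k _ => hprod k)]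
  rw [← Finset.mul_prod_erase Finset.univ _ (Finset.mem_univ i)]
  rw [← Finset.mul_prod_erase _ _
    (Finset.mem_erase.mpr ⟨hij, Finset.mem_univ j⟩)]
  rw [Finset.prod_eq_one (fun k hk => ?_)]
  · simp [hij]
  · rcases Finset.mem_erase.mp hk with ⟨hkj, hk2⟩
    rcases Finset.mem_erase.mp hk2 with ⟨hki, _⟩
    simp [hki, hkj]

end PairMap

section Ball

variable (d : ℕ)

lemma nn_volB_pos :
    volume (Metric.closedBall (0 : EuclideanSpace ℝ (Fin d)) 1) ≠ 0 :=
  (Metric.measure_closedBall_pos volume (0 : EuclideanSpace ℝ (Fin d)) one_pos).ne'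

lemma nn_volB_ne_top :
    volume (Metric.closedBall (0 : EuclideanSpace ℝ (Fin d)) 1) ≠ ⊤ :=
  measure_closedBall_lt_top.ne

lemma nn_prob :
    IsProbabilityMeasure
      ((volume (Metric.closedBall (0 : EuclideanSpace ℝ (Fin d)) 1))⁻¹ •
        volume.restrict (Metric.closedBall (0 : EuclideanSpace ℝ (Fin d)) 1)) := by
  constructor
  rw [Measure.smul_apply, Measure.restrict_apply_univ, smul_eq_mul,
    ENNReal.inv_mul_cancel (nn_volB_pos d) (nn_volB_ne_top d)]

lemma nn_ball_bound (z : EuclideanSpace ℝ (Fin d)) {r : ℝ} (hr : 0 ≤ r) :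
    ((volume (Metric.closedBall (0 : EuclideanSpace ℝ (Fin d)) 1))⁻¹ •
        volume.restrict (Metric.closedBall (0 : EuclideanSpace ℝ (Fin d)) 1))
      (Metric.ball z r) ≤ ENNReal.ofReal (r ^ d) := by
  set B := Metric.closedBall (0 : EuclideanSpace ℝ (Fin d)) 1
  have h1 : volume.restrict B (Metric.ball z r) ≤ volume (Metric.closedBall z r) := by
    rw [Measure.restrict_apply measurableSet_ball]
    exact measure_mono ((Set.inter_subset_left).trans ball_subset_closedBall)
  have h2 : volume (Metric.closedBall z r)
      = ENNReal.ofReal (r ^ d) * volume B := by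
    rw [Measure.addHaar_closedBall' volume z hr, finrank_euclideanSpace_fin]
  calc ((volume B)⁻¹ • volume.restrict B) (Metric.ball z r)
      = (volume B)⁻¹ * volume.restrict B (Metric.ball z r) := by
        rw [Measure.smul_apply, smul_eq_mul]
    _ ≤ (volume B)⁻¹ * (ENNReal.ofReal (r ^ d) * volume B) := by
        rw [← h2]; exact mul_le_mul_right h1 _
    _ = ENNReal.ofReal (r ^ d) * ((volume B)⁻¹ * volume B) := by ring
    _ = ENNReal.ofReal (r ^ d) := by
        rw [ENNReal.inv_mul_cancel (nn_volB_pos d) (nn_volB_ne_top d), mul_one]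

end Ball

section Bad

lemma nn_bad (d : ℕ) {n : ℕ} (i j : Fin n) (hij : j ≠ i) {r : ℝ} (hr : 0 ≤ r) :
    (Measure.pi fun _ : Fin n =>
      (volume (Metric.closedBall (0 : EuclideanSpace ℝ (Fin d)) 1))⁻¹ •
        volume.restrict (Metric.closedBall (0 : EuclideanSpace ℝ (Fin d)) 1))
      {x | dist (x i) (x j) < r} ≤ ENNReal.ofReal (r ^ d) := by
  haveI := nn_prob d
  set ν : Measure (EuclideanSpace ℝ (Fin d)) :=
    (volume (Metric.closedBall (0 : EuclideanSpace ℝ (Fin d)) 1))⁻¹ •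
      volume.restrict (Metric.closedBall (0 : EuclideanSpace ℝ (Fin d)) 1) with hν
  have hmeas : Measurable (fun x : Fin n → EuclideanSpace ℝ (Fin d) => (x i, x j)) :=
    (measurable_pi_apply i).prodMk (measurable_pi_apply j)
  have hS : MeasurableSet {p : EuclideanSpace ℝ (Fin d) × EuclideanSpace ℝ (Fin d) |
      dist p.1 p.2 < r} :=
    (isOpen_lt (continuous_fst.dist continuous_snd) continuous_const).measurableSet
  have hpre : {x : Fin n → EuclideanSpace ℝ (Fin d) | dist (x i) (x j) < r}
      = (fun x : Fin n → EuclideanSpace ℝ (Fin d) => (x i, x j)) ⁻¹'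
        {p | dist p.1 p.2 < r} := rfl
  rw [hpre, ← Measure.map_apply hmeas hS, nn_pair_map ν i j hij, Measure.prod_apply hS]
  have hslice : ∀ a : EuclideanSpace ℝ (Fin d),
      (Prod.mk a ⁻¹' {p : EuclideanSpace ℝ (Fin d) × EuclideanSpace ℝ (Fin d) |
        dist p.1 p.2 < r}) = Metric.ball a r := by
    intro a; ext b; simp [Metric.mem_ball, dist_comm]
  calc ∫⁻ a, ν (Prod.mk a ⁻¹' {p : EuclideanSpace ℝ (Fin d) ×
        EuclideanSpace ℝ (Fin d) | dist p.1 p.2 < r}) ∂ν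
      ≤ ∫⁻ _, ENNReal.ofReal (r ^ d) ∂ν := by
        refine lintegral_mono fun a => ?_
        rw [hslice a]
        exact nn_ball_bound d a hr
    _ = ENNReal.ofReal (r ^ d) := by simp

end Bad

open MeasureTheory Metric
open scoped ENNReal

lemma nn_main (d : ℕ) (hd : 1 ≤ d) {n : ℕ} (hn : 2 ≤ n) (i0 : Fin n) :
    (∫ x : Fin n → EuclideanSpace ℝ (Fin d),
        (⨅ j : {j : Fin n // j ≠ i0}, ‖x i0 - x (j : Fin n)‖)
      ∂(Measure.pi fun _ : Fin n =>
          (volume (Metric.closedBall (0 : EuclideanSpace ℝ (Fin d)) 1))⁻¹ •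
            volume.restrict (Metric.closedBall (0 : EuclideanSpace ℝ (Fin d)) 1)))
    ≥ (1/4 : ℝ) * (n : ℝ) ^ (-(1 / (d : ℝ))) := by
  classical
  have hd0 : (0:ℝ) < d := by exact_mod_cast hd
  have hn0 : (0:ℝ) < n := by positivity
  set ν : Measure (EuclideanSpace ℝ (Fin d)) :=
    (volume (Metric.closedBall (0 : EuclideanSpace ℝ (Fin d)) 1))⁻¹ •
      volume.restrict (Metric.closedBall (0 : EuclideanSpace ℝ (Fin d)) 1) with hν
  haveI : IsProbabilityMeasure ν := nn_prob d
  set P : Measure (Fin n → EuclideanSpace ℝ (Fin d)) := Measure.pi fun _ => ν with hP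
  haveI : IsProbabilityMeasure P := by rw [hP]; infer_instance
  -- the radius
  set r : ℝ := (2 * (n:ℝ)) ^ (-(1 / (d:ℝ))) with hr
  have hr0 : 0 < r := Real.rpow_pos_of_pos (by positivity) _
  have hrd : r ^ d = (2 * (n:ℝ))⁻¹ := by
    rw [hr, ← Real.rpow_natCast ((2*(n:ℝ)) ^ (-(1/(d:ℝ)))) d,
      ← Real.rpow_mul (by positivity)]
    rw [show -(1/(d:ℝ)) * d = -1 by field_simp]
    exact Real.rpow_neg_one _
  -- the good event
  set A : Set (Fin n → EuclideanSpace ℝ (Fin d)) :=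
    ⋂ j ∈ Finset.univ.erase i0, {x | r ≤ dist (x i0) (x j)} with hA
  have hA_meas : MeasurableSet A := by
    refine MeasurableSet.biInter (Set.to_countable _) fun j _ => ?_
    exact (isClosed_le continuous_const
      ((continuous_apply i0).dist (continuous_apply j))).measurableSet
  -- complement bound
  have hAc : P Aᶜ ≤ ENNReal.ofReal (1/2) := by
    have hcompl : Aᶜ = ⋃ j ∈ Finset.univ.erase i0, {x | dist (x i0) (x j) < r} := by
      rw [hA, Set.compl_iInter₂]
      refine Set.iUnion₂_congr fun j _ => ?_
      ext x; simp [not_le]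
    rw [hcompl]
    calc P (⋃ j ∈ Finset.univ.erase i0, {x | dist (x i0) (x j) < r})
        ≤ ∑ j ∈ Finset.univ.erase i0, P {x | dist (x i0) (x j) < r} :=
          measure_biUnion_finset_le _ _
      _ ≤ ∑ j ∈ Finset.univ.erase i0, ENNReal.ofReal (r ^ d) := by
          refine Finset.sum_le_sum fun j hj => ?_
          exact nn_bad d i0 j (Finset.mem_erase.mp hj).1 hr0.le
      _ = ((n - 1 : ℕ) : ℝ≥0∞) * ENNReal.ofReal (r ^ d) := by
          rw [Finset.sum_const, Finset.card_erase_of_mem (Finset.mem_univ i0),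
            Finset.card_univ, Fintype.card_fin, nsmul_eq_mul]
      _ ≤ ENNReal.ofReal (1/2) := by
          rw [hrd, ← ENNReal.ofReal_natCast, ← ENNReal.ofReal_mul (by positivity)]
          refine ENNReal.ofReal_le_ofReal ?_
          have h1 : ((n - 1 : ℕ) : ℝ) ≤ (n : ℝ) := by
            exact_mod_cast Nat.sub_le n 1
          calc ((n - 1 : ℕ) : ℝ) * (2 * (n:ℝ))⁻¹ ≤ (n:ℝ) * (2 * (n:ℝ))⁻¹ := by
                exact mul_le_mul_of_nonneg_right h1 (by positivity)
            _ = 1/2 := by field_simp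
  -- lower bound on P A
  have hPA : ENNReal.ofReal (1/2) ≤ P A := by
    have hsum : P A + P Aᶜ = 1 := by
      rw [measure_add_measure_compl hA_meas, measure_univ]
    have h1 : (1 : ℝ≥0∞) ≤ P A + ENNReal.ofReal (1/2) := by
      rw [← hsum]; exact add_le_add le_rfl hAc
    have h2 : (1 : ℝ≥0∞) - ENNReal.ofReal (1/2) ≤ P A :=
      tsub_le_iff_right.mpr h1
    calc ENNReal.ofReal (1/2) = 1 - ENNReal.ofReal (1/2) := by
          rw [← ENNReal.ofReal_one, ← ENNReal.ofReal_sub _ (by norm_num)]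
          norm_num
      _ ≤ P A := h2
  have htA : (1/2 : ℝ) ≤ (P A).toReal := by
    have := ENNReal.toReal_mono (measure_ne_top P A) hPA
    rwa [ENNReal.toReal_ofReal (by norm_num)] at this
  -- the integrand
  set f : (Fin n → EuclideanSpace ℝ (Fin d)) → ℝ :=
    fun x => ⨅ j : {j : Fin n // j ≠ i0}, ‖x i0 - x (j : Fin n)‖ with hf
  haveI : Nonempty {j : Fin n // j ≠ i0} := by
    obtain ⟨j, hj⟩ := Fintype.exists_ne_of_one_lt_card (by simp; omega) i0
    exact ⟨⟨j, hj⟩⟩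
  have hf_nonneg : ∀ x, 0 ≤ f x := fun x => Real.iInf_nonneg fun j => norm_nonneg _
  have hbdd : ∀ x : Fin n → EuclideanSpace ℝ (Fin d), BddBelow (Set.range fun j : {j : Fin n // j ≠ i0} =>
      ‖x i0 - x (j : Fin n)‖) := fun x =>
    ⟨0, by rintro _ ⟨j, rfl⟩; exact norm_nonneg _⟩
  have hf_meas : Measurable f :=
    Measurable.iInf fun j =>
      ((measurable_pi_apply i0).sub (measurable_pi_apply (j : Fin n))).norm
  -- a.e. all coordinates in the ball
  have hae : ∀ᵐ x ∂P, ∀ i : Fin n,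
      x i ∈ Metric.closedBall (0 : EuclideanSpace ℝ (Fin d)) 1 := by
    have hνB : ν (Metric.closedBall (0 : EuclideanSpace ℝ (Fin d)) 1) = 1 := by
      rw [hν, Measure.smul_apply, Measure.restrict_apply measurableSet_closedBall,
        Set.inter_self, smul_eq_mul,
        ENNReal.inv_mul_cancel (nn_volB_pos d) (nn_volB_ne_top d)]
    have hSmeas : MeasurableSet (Set.pi Set.univ fun _ : Fin n =>
        Metric.closedBall (0 : EuclideanSpace ℝ (Fin d)) 1) :=
      MeasurableSet.univ_pi fun _ => measurableSet_closedBall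
    have hS1 : P (Set.pi Set.univ fun _ : Fin n =>
        Metric.closedBall (0 : EuclideanSpace ℝ (Fin d)) 1) = 1 := by
      rw [hP, Measure.pi_pi]
      simp [hνB]
    rw [ae_iff]
    have : {x : Fin n → EuclideanSpace ℝ (Fin d) | ¬ ∀ i : Fin n,
        x i ∈ Metric.closedBall (0 : EuclideanSpace ℝ (Fin d)) 1}
        = (Set.pi Set.univ fun _ : Fin n =>
            Metric.closedBall (0 : EuclideanSpace ℝ (Fin d)) 1)ᶜ := by
      ext x; simp [Set.mem_pi]
    rw [this, measure_compl hSmeas (measure_ne_top _ _), hS1, measure_univ, tsub_self]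
  -- integrability
  have hf_int : Integrable f P := by
    refine Integrable.mono' (integrable_const (2:ℝ)) hf_meas.aestronglyMeasurable ?_
    filter_upwards [hae] with x hx
    rw [Real.norm_of_nonneg (hf_nonneg x)]
    obtain ⟨j1⟩ := (inferInstance : Nonempty {j : Fin n // j ≠ i0})
    calc f x ≤ ‖x i0 - x (j1 : Fin n)‖ := ciInf_le (hbdd x) j1
      _ ≤ ‖x i0‖ + ‖x (j1 : Fin n)‖ := norm_sub_le _ _
      _ ≤ 1 + 1 := by
          gcongr
          · exact mem_closedBall_zero_iff.mp (hx i0)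
          · exact mem_closedBall_zero_iff.mp (hx (j1 : Fin n))
      _ = 2 := by norm_num
  -- pointwise lower bound on A
  have hlow : ∀ x ∈ A, r ≤ f x := by
    intro x hx
    refine le_ciInf fun j => ?_
    have hj : (j : Fin n) ∈ Finset.univ.erase i0 :=
      Finset.mem_erase.mpr ⟨j.2, Finset.mem_univ _⟩
    have := Set.mem_iInter₂.mp hx (j : Fin n) hj
    rwa [Set.mem_setOf_eq, dist_eq_norm] at this
  -- assemble
  have hchain : r * (P A).toReal ≤ ∫ x, f x ∂P := by
    calc r * (P A).toReal ≤ ∫ x in A, f x ∂P :=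
          by have := setIntegral_ge_of_const_le_real hA_meas (measure_ne_top P A) hlow
                hf_int.integrableOn
             exact this
      _ ≤ ∫ x, f x ∂P :=
          setIntegral_le_integral hf_int (Filter.Eventually.of_forall hf_nonneg)
  have hrlow : (1/2 : ℝ) * (n : ℝ) ^ (-(1 / (d:ℝ))) ≤ r := by
    rw [hr, Real.mul_rpow (by norm_num) hn0.le]
    have h2 : (1/2 : ℝ) ≤ (2:ℝ) ^ (-(1 / (d:ℝ))) := by
      have : ((2:ℝ))⁻¹ = (2:ℝ) ^ (-1 : ℝ) := (Real.rpow_neg_one 2).symm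
      rw [one_div, this]
      refine (Real.rpow_le_rpow_left_iff (x := 2) (by norm_num)).mpr ?_
      rw [neg_le_neg_iff, div_le_one hd0]
      exact_mod_cast hd
    exact mul_le_mul_of_nonneg_right h2 (Real.rpow_nonneg hn0.le _)
  have hnpow : (0:ℝ) < (n:ℝ) ^ (-(1 / (d:ℝ))) := Real.rpow_pos_of_pos hn0 _
  refine le_trans ?_ hchain
  calc (1/4 : ℝ) * (n : ℝ) ^ (-(1 / (d:ℝ)))
      = ((1/2 : ℝ) * (n : ℝ) ^ (-(1 / (d:ℝ)))) * (1/2) := by ring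
    _ ≤ r * (P A).toReal := by
        refine mul_le_mul hrlow htA (by norm_num) hr0.le

/-- Lower bound on the expected nearest-neighbour distance of `n` i.i.d. points
drawn uniformly from the closed unit ball of `ℝ^d`: it is `Ω(n^{-1/d})`. -/
theorem expected_nearest_neighbour_lower (d : ℕ) (hd : 1 ≤ d) :
    ∃ c : ℝ, 0 < c ∧ ∀ n : ℕ, ∀ hn : 2 ≤ n,
      (∫ x : Fin n → EuclideanSpace ℝ (Fin d),
          (⨅ j : {j : Fin n // j ≠ ⟨0, by omega⟩}, ‖x ⟨0, by omega⟩ - x (j : Fin n)‖)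
        ∂(Measure.pi fun _ : Fin n =>
            (volume (Metric.closedBall (0 : EuclideanSpace ℝ (Fin d)) 1))⁻¹ •
              volume.restrict (Metric.closedBall (0 : EuclideanSpace ℝ (Fin d)) 1)))
      ≥ c * (n : ℝ) ^ (-(1 / (d : ℝ))) := by
  exact ⟨1/4, by norm_num, fun n hn => nn_main d hd hn ⟨0, by omega⟩⟩
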